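/- Let a > 0, b > 0, t > 0, λ₁,…,λ_k > 0, λ = ∑_{j=1}^{k} λ_j, and n ∈ ℕ. Then ∫_0^∞ ( ∑_{x ∈ Ω(k,n)} ∏_{j=1}^{k} ((λ_j y)^{x_j}/x_j!)·e^{-λ_j y} )·(a^{bt}/Γ(bt))·y^{bt-1}·e^{-ay} dy = ((a/(λ+a))^{bt}/Γ(bt))·∑_{x ∈ Ω(k,n)} Γ(∑_{j=1}^{k} x_j + bt)·∏_{j=1}^{k} ((λ_j/(λ+a))^{x_j}/x_j!), where Ω(k,n) = {x ∈ ℕ^k : ∑_j j x_j = n}. -/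

import Mathlib

open scoped BigOperators
open MeasureTheory

/-- State probabilities of the generalized counting process. -/
noncomputable def gcpPMF (k : ℕ) (lam : Fin k → ℝ) (t : ℝ) (n : ℕ) : ℝ :=
  ∑' x : Fin k → ℕ,
    if (∑ j, (j.1 + 1) * x j) = n then
      ∏ j, (lam j * t) ^ (x j) / (Nat.factorial (x j) : ℝ) * Real.exp (-(lam j * t))
    else 0

/-- Pmf of the GCP time-changed by an independent gamma subordinator:
`∫_0^∞ p(n,y)·(a^{bt}/Γ(bt))·y^{bt-1}·e^{-ay} dy
 = ((a/(λ+a))^{bt}/Γ(bt))·∑_{x∈Ω(k,n)} Γ(∑_j x_j + bt)·∏_j (λ_j/(λ+a))^{x_j}/x_j!`. -/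
theorem gcp_gamma_subordinator_pmf (a b t : ℝ) (ha : 0 < a) (hb : 0 < b) (ht : 0 < t)
    (k : ℕ) (lam : Fin k → ℝ) (hlam : ∀ j, 0 < lam j) (n : ℕ) :
    (∫ y in Set.Ioi (0 : ℝ),
        gcpPMF k lam y n * (a ^ (b * t) / Real.Gamma (b * t)) * y ^ (b * t - 1) *
          Real.exp (-(a * y))) =
      (a / ((∑ j, lam j) + a)) ^ (b * t) / Real.Gamma (b * t) *
        ∑' x : Fin k → ℕ,
          (if (∑ j, (j.1 + 1) * x j) = n then
            Real.Gamma ((∑ j, (x j : ℝ)) + b * t) *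
              ∏ j, (lam j / ((∑ i, lam i) + a)) ^ (x j) / (Nat.factorial (x j) : ℝ)
          else 0) := by
  classical
  set L : ℝ := ∑ j, lam j with hL
  have hLpos : 0 ≤ L := Finset.sum_nonneg fun j _ => (hlam j).le
  set c : ℝ := L + a with hcdef
  have hc : 0 < c := by positivity
  have hbt : 0 < b * t := mul_pos hb ht
  have hGbt : 0 < Real.Gamma (b * t) := Real.Gamma_pos_of_pos hbt
  set S : Finset (Fin k → ℕ) := Fintype.piFinset (fun _ => Finset.range (n + 1)) with hS
  have hsupp : ∀ x : Fin k → ℕ, x ∉ S → (∑ j, (j.1 + 1) * x j) ≠ n := by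
    intro x hx hn
    simp only [hS, Fintype.mem_piFinset, Finset.mem_range, not_forall, not_lt] at hx
    obtain ⟨j, hj⟩ := hx
    have h1 : (j.1 + 1) * x j ≤ ∑ i, (i.1 + 1) * x i :=
      Finset.single_le_sum (f := fun i : Fin k => (i.1 + 1) * x i)
        (fun i _ => Nat.zero_le _) (Finset.mem_univ j)
    have h2 : x j ≤ (j.1 + 1) * x j := Nat.le_mul_of_pos_left _ (Nat.succ_pos _)
    omega
  -- finite-sum form of the pmf
  have hpmf : ∀ y : ℝ, gcpPMF k lam y n =
      ∑ x ∈ S, (if (∑ j, (j.1 + 1) * x j) = n then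
        ∏ j, (lam j * y) ^ (x j) / (Nat.factorial (x j) : ℝ) * Real.exp (-(lam j * y))
      else 0) := by
    intro y
    exact tsum_eq_sum (fun x hx => if_neg (hsupp x hx))
  have hrhs : (∑' x : Fin k → ℕ,
      (if (∑ j, (j.1 + 1) * x j) = n then
        Real.Gamma ((∑ j, (x j : ℝ)) + b * t) *
          ∏ j, (lam j / ((∑ i, lam i) + a)) ^ (x j) / (Nat.factorial (x j) : ℝ)
      else 0)) =
      ∑ x ∈ S, (if (∑ j, (j.1 + 1) * x j) = n then
        Real.Gamma ((∑ j, (x j : ℝ)) + b * t) *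
          ∏ j, (lam j / ((∑ i, lam i) + a)) ^ (x j) / (Nat.factorial (x j) : ℝ)
      else 0) :=
    tsum_eq_sum (fun x hx => if_neg (hsupp x hx))
  -- integrability of the gamma kernel
  have hker : ∀ A : ℝ, 0 < A →
      IntegrableOn (fun y : ℝ => y ^ (A - 1) * Real.exp (-(c * y))) (Set.Ioi 0) := by
    intro A hA
    have := integrableOn_rpow_mul_exp_neg_mul_rpow (p := 1) (s := A - 1) (b := c)
      (by linarith) one_pos hc
    refine this.congr_fun (fun y _ => ?_) measurableSet_Ioi
    simp [Real.rpow_one, neg_mul]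
  -- pointwise description of each term on Ioi 0
  have hpt : ∀ x : Fin k → ℕ, ∀ y : ℝ, y ∈ Set.Ioi (0:ℝ) →
      (∏ j, (lam j * y) ^ (x j) / (Nat.factorial (x j) : ℝ) * Real.exp (-(lam j * y))) *
        (a ^ (b * t) / Real.Gamma (b * t)) * y ^ (b * t - 1) * Real.exp (-(a * y)) =
      ((∏ j, lam j ^ (x j) / (Nat.factorial (x j) : ℝ)) * (a ^ (b * t) / Real.Gamma (b * t))) *
        (y ^ (((∑ j, x j : ℕ) : ℝ) + b * t - 1) * Real.exp (-(c * y))) := by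
    intro x y hy
    have hy0 : 0 < y := hy
    have h1 : (∏ j, (lam j * y) ^ (x j) / (Nat.factorial (x j) : ℝ) *
        Real.exp (-(lam j * y))) =
        (∏ j, lam j ^ (x j) / (Nat.factorial (x j) : ℝ)) * y ^ (∑ j, x j) *
          Real.exp (-(L * y)) := by
      rw [show -(L * y) = ∑ j, -(lam j * y) by simp [hL, Finset.sum_mul],
        Real.exp_sum, ← Finset.prod_pow_eq_pow_sum, ← Finset.prod_mul_distrib,
        ← Finset.prod_mul_distrib]
      refine Finset.prod_congr rfl fun j _ => ?_
      rw [mul_pow]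
      ring
    rw [h1]
    have h2 : (y:ℝ) ^ (∑ j, x j) * y ^ (b * t - 1)
        = y ^ (((∑ j, x j : ℕ) : ℝ) + b * t - 1) := by
      rw [← Real.rpow_natCast y (∑ j, x j), ← Real.rpow_add hy0]
      ring_nf
    have h3 : Real.exp (-(L * y)) * Real.exp (-(a * y)) = Real.exp (-(c * y)) := by
      rw [← Real.exp_add, hcdef]; ring_nf
    calc (∏ j, lam j ^ (x j) / (Nat.factorial (x j) : ℝ)) * y ^ (∑ j, x j) *
          Real.exp (-(L * y)) * (a ^ (b * t) / Real.Gamma (b * t)) * y ^ (b * t - 1) *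
          Real.exp (-(a * y))
        = ((∏ j, lam j ^ (x j) / (Nat.factorial (x j) : ℝ)) *
            (a ^ (b * t) / Real.Gamma (b * t))) *
          ((y ^ (∑ j, x j) * y ^ (b * t - 1)) *
            (Real.exp (-(L * y)) * Real.exp (-(a * y)))) := by ring
      _ = _ := by rw [h2, h3]
  -- integrability of each summand
  have hint : ∀ x ∈ S, IntegrableOn (fun y : ℝ =>
      (if (∑ j, (j.1 + 1) * x j) = n then
        ∏ j, (lam j * y) ^ (x j) / (Nat.factorial (x j) : ℝ) * Real.exp (-(lam j * y))
      else 0) * (a ^ (b * t) / Real.Gamma (b * t)) * y ^ (b * t - 1) *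
        Real.exp (-(a * y))) (Set.Ioi 0) := by
    intro x _
    by_cases hx : (∑ j, (j.1 + 1) * x j) = n
    · simp only [hx, if_true]
      have hA : (0:ℝ) < ((∑ j, x j : ℕ) : ℝ) + b * t := by positivity
      exact MeasureTheory.IntegrableOn.congr_fun
        ((hker _ hA).const_mul
          ((∏ j, lam j ^ (x j) / (Nat.factorial (x j) : ℝ)) *
            (a ^ (b * t) / Real.Gamma (b * t))))
        (fun y hy => (hpt x y hy).symm) measurableSet_Ioi
    · simp only [hx, if_false, zero_mul]
      exact integrableOn_zero
  -- rewrite LHS as finite sum of integrals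
  have key : (∫ y in Set.Ioi (0 : ℝ),
      gcpPMF k lam y n * (a ^ (b * t) / Real.Gamma (b * t)) * y ^ (b * t - 1) *
        Real.exp (-(a * y))) =
      ∑ x ∈ S, ∫ y in Set.Ioi (0 : ℝ),
        (if (∑ j, (j.1 + 1) * x j) = n then
          ∏ j, (lam j * y) ^ (x j) / (Nat.factorial (x j) : ℝ) * Real.exp (-(lam j * y))
        else 0) * (a ^ (b * t) / Real.Gamma (b * t)) * y ^ (b * t - 1) *
          Real.exp (-(a * y)) := by
    rw [← integral_finset_sum S hint]
    refine setIntegral_congr_fun measurableSet_Ioi (fun y _ => ?_)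
    rw [hpmf y]
    rw [Finset.sum_mul, Finset.sum_mul, Finset.sum_mul]
  rw [key, hrhs, Finset.mul_sum]
  refine Finset.sum_congr rfl fun x _ => ?_
  by_cases hx : (∑ j, (j.1 + 1) * x j) = n
  · simp only [hx, if_true]
    rw [setIntegral_congr_fun measurableSet_Ioi (hpt x)]
    rw [MeasureTheory.integral_const_mul]
    have hA : (0:ℝ) < ((∑ j, x j : ℕ) : ℝ) + b * t := by positivity
    have hint2 : (∫ y in Set.Ioi (0:ℝ),
        y ^ (((∑ j, x j : ℕ) : ℝ) + b * t - 1) * Real.exp (-(c * y)))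
        = (1 / c) ^ (((∑ j, x j : ℕ) : ℝ) + b * t) *
          Real.Gamma (((∑ j, x j : ℕ) : ℝ) + b * t) :=
      Real.integral_rpow_mul_exp_neg_mul_Ioi hA hc
    rw [hint2]
    -- now pure algebra
    have hsum : (∑ j, (x j : ℝ)) = ((∑ j, x j : ℕ) : ℝ) := by push_cast; rfl
    rw [hsum]
    have e1 : (1 / c) ^ (((∑ j, x j : ℕ) : ℝ) + b * t)
        = (1 / c) ^ (∑ j, x j) * (1 / c) ^ (b * t) := by
      rw [Real.rpow_add (by positivity), Real.rpow_natCast]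
    have e2 : (a / c) ^ (b * t) = a ^ (b * t) * (1 / c) ^ (b * t) := by
      rw [div_eq_mul_one_div, Real.mul_rpow ha.le (by positivity)]
    have e3 : (∏ j, (lam j / c) ^ (x j) / (Nat.factorial (x j) : ℝ))
        = (∏ j, lam j ^ (x j) / (Nat.factorial (x j) : ℝ)) * (1 / c) ^ (∑ j, x j) := by
      rw [← Finset.prod_pow_eq_pow_sum, ← Finset.prod_mul_distrib]
      refine Finset.prod_congr rfl fun j _ => ?_
      rw [div_pow, one_div, inv_pow]
      ring
    rw [e1, e2, e3]
    ring
  · simp only [hx, if_false, zero_mul, mul_zero]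
    simp
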